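/- Urbantke formula. Let e⁰, e¹, e², e³ be covectors on ℝ⁴ whose component matrix E = (e^a_μ) satisfies det E > 0. Define η_{μν} = −e⁰_μ e⁰_ν + e¹_μ e¹_ν + e²_μ e²_ν + e³_μ e³_ν and Σ^i_{μν} = i(e⁰_μ e^i_ν − e⁰_ν e^i_μ) − Σ_{j,k} ε^{ijk} e^j_μ e^k_ν. Then (i/12) Σ_{i,j,k} Σ_{ρ,σ,α,β} ε^{ijk} Σ^i_{μρ} Σ^j_{νσ} Σ^k_{αβ} ε̃^{ρσαβ} = −(det E) · η_{μν} for all μ, ν, where ε̃^{ρσαβ} is the totally antisymmetric symbol on four indices with ε̃^{0123} = 1; note det E = √(−det η). -/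

import Mathlib

open Matrix Complex

noncomputable section

namespace Urbantke

/-- The alternating symbol on three indices, `eps3 0 1 2 = 1`. -/
def eps3 (i j k : Fin 3) : ℝ :=
  ((j.val : ℝ) - i.val) * ((k.val : ℝ) - j.val) * ((k.val : ℝ) - i.val) / 2

/-- The alternating symbol on four indices, `eps4 0 1 2 3 = 1`. -/
def eps4 (a b c d : Fin 4) : ℝ :=
  ((b.val : ℝ) - a.val) * ((c.val : ℝ) - a.val) * ((d.val : ℝ) - a.val)
    * ((c.val : ℝ) - b.val) * ((d.val : ℝ) - b.val) * ((d.val : ℝ) - c.val) / 12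

/-- The Minkowski-signature metric `η_{μν} = −e⁰_μ e⁰_ν + Σ_i e^i_μ e^i_ν`. -/
def eta (E : Fin 4 → Fin 4 → ℝ) : Matrix (Fin 4) (Fin 4) ℝ := fun μ ν =>
  -(E 0 μ * E 0 ν) + E 1 μ * E 1 ν + E 2 μ * E 2 ν + E 3 μ * E 3 ν

/-- The self-dual 2-forms
`Σ^i_{μν} = i(e⁰_μ e^i_ν − e⁰_ν e^i_μ) − ε^{ijk} e^j_μ e^k_ν` for `i = 1,2,3`. -/
def Sig (E : Fin 4 → Fin 4 → ℝ) (i : Fin 3) (μ ν : Fin 4) : ℂ :=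
  Complex.I * ((E 0 μ : ℂ) * (E i.succ ν : ℂ) - (E 0 ν : ℂ) * (E i.succ μ : ℂ))
    - ∑ j, ∑ k, (eps3 i j k : ℂ) * (E j.succ μ : ℂ) * (E k.succ ν : ℂ)

lemma v3 : ((3 : Fin 4)).val = 3 := rfl
lemma e3_000 : eps3 0 0 0 = 0 := by norm_num [eps3]
lemma e3_001 : eps3 0 0 1 = 0 := by norm_num [eps3]
lemma e3_002 : eps3 0 0 2 = 0 := by norm_num [eps3]
lemma e3_010 : eps3 0 1 0 = 0 := by norm_num [eps3]
lemma e3_011 : eps3 0 1 1 = 0 := by norm_num [eps3]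
lemma e3_012 : eps3 0 1 2 = 1 := by norm_num [eps3]
lemma e3_020 : eps3 0 2 0 = 0 := by norm_num [eps3]
lemma e3_021 : eps3 0 2 1 = -1 := by norm_num [eps3]
lemma e3_022 : eps3 0 2 2 = 0 := by norm_num [eps3]
lemma e3_100 : eps3 1 0 0 = 0 := by norm_num [eps3]
lemma e3_101 : eps3 1 0 1 = 0 := by norm_num [eps3]
lemma e3_102 : eps3 1 0 2 = -1 := by norm_num [eps3]
lemma e3_110 : eps3 1 1 0 = 0 := by norm_num [eps3]
lemma e3_111 : eps3 1 1 1 = 0 := by norm_num [eps3]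
lemma e3_112 : eps3 1 1 2 = 0 := by norm_num [eps3]
lemma e3_120 : eps3 1 2 0 = 1 := by norm_num [eps3]
lemma e3_121 : eps3 1 2 1 = 0 := by norm_num [eps3]
lemma e3_122 : eps3 1 2 2 = 0 := by norm_num [eps3]
lemma e3_200 : eps3 2 0 0 = 0 := by norm_num [eps3]
lemma e3_201 : eps3 2 0 1 = 1 := by norm_num [eps3]
lemma e3_202 : eps3 2 0 2 = 0 := by norm_num [eps3]
lemma e3_210 : eps3 2 1 0 = -1 := by norm_num [eps3]
lemma e3_211 : eps3 2 1 1 = 0 := by norm_num [eps3]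
lemma e3_212 : eps3 2 1 2 = 0 := by norm_num [eps3]
lemma e3_220 : eps3 2 2 0 = 0 := by norm_num [eps3]
lemma e3_221 : eps3 2 2 1 = 0 := by norm_num [eps3]
lemma e3_222 : eps3 2 2 2 = 0 := by norm_num [eps3]
lemma e4_0000 : eps4 0 0 0 0 = 0 := by norm_num [eps4, v3]
lemma e4_0001 : eps4 0 0 0 1 = 0 := by norm_num [eps4, v3]
lemma e4_0002 : eps4 0 0 0 2 = 0 := by norm_num [eps4, v3]
lemma e4_0003 : eps4 0 0 0 3 = 0 := by norm_num [eps4, v3]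
lemma e4_0010 : eps4 0 0 1 0 = 0 := by norm_num [eps4, v3]
lemma e4_0011 : eps4 0 0 1 1 = 0 := by norm_num [eps4, v3]
lemma e4_0012 : eps4 0 0 1 2 = 0 := by norm_num [eps4, v3]
lemma e4_0013 : eps4 0 0 1 3 = 0 := by norm_num [eps4, v3]
lemma e4_0020 : eps4 0 0 2 0 = 0 := by norm_num [eps4, v3]
lemma e4_0021 : eps4 0 0 2 1 = 0 := by norm_num [eps4, v3]
lemma e4_0022 : eps4 0 0 2 2 = 0 := by norm_num [eps4, v3]
lemma e4_0023 : eps4 0 0 2 3 = 0 := by norm_num [eps4, v3]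
lemma e4_0030 : eps4 0 0 3 0 = 0 := by norm_num [eps4, v3]
lemma e4_0031 : eps4 0 0 3 1 = 0 := by norm_num [eps4, v3]
lemma e4_0032 : eps4 0 0 3 2 = 0 := by norm_num [eps4, v3]
lemma e4_0033 : eps4 0 0 3 3 = 0 := by norm_num [eps4, v3]
lemma e4_0100 : eps4 0 1 0 0 = 0 := by norm_num [eps4, v3]
lemma e4_0101 : eps4 0 1 0 1 = 0 := by norm_num [eps4, v3]
lemma e4_0102 : eps4 0 1 0 2 = 0 := by norm_num [eps4, v3]
lemma e4_0103 : eps4 0 1 0 3 = 0 := by norm_num [eps4, v3]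
lemma e4_0110 : eps4 0 1 1 0 = 0 := by norm_num [eps4, v3]
lemma e4_0111 : eps4 0 1 1 1 = 0 := by norm_num [eps4, v3]
lemma e4_0112 : eps4 0 1 1 2 = 0 := by norm_num [eps4, v3]
lemma e4_0113 : eps4 0 1 1 3 = 0 := by norm_num [eps4, v3]
lemma e4_0120 : eps4 0 1 2 0 = 0 := by norm_num [eps4, v3]
lemma e4_0121 : eps4 0 1 2 1 = 0 := by norm_num [eps4, v3]
lemma e4_0122 : eps4 0 1 2 2 = 0 := by norm_num [eps4, v3]
lemma e4_0123 : eps4 0 1 2 3 = 1 := by norm_num [eps4, v3]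
lemma e4_0130 : eps4 0 1 3 0 = 0 := by norm_num [eps4, v3]
lemma e4_0131 : eps4 0 1 3 1 = 0 := by norm_num [eps4, v3]
lemma e4_0132 : eps4 0 1 3 2 = -1 := by norm_num [eps4, v3]
lemma e4_0133 : eps4 0 1 3 3 = 0 := by norm_num [eps4, v3]
lemma e4_0200 : eps4 0 2 0 0 = 0 := by norm_num [eps4, v3]
lemma e4_0201 : eps4 0 2 0 1 = 0 := by norm_num [eps4, v3]
lemma e4_0202 : eps4 0 2 0 2 = 0 := by norm_num [eps4, v3]
lemma e4_0203 : eps4 0 2 0 3 = 0 := by norm_num [eps4, v3]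
lemma e4_0210 : eps4 0 2 1 0 = 0 := by norm_num [eps4, v3]
lemma e4_0211 : eps4 0 2 1 1 = 0 := by norm_num [eps4, v3]
lemma e4_0212 : eps4 0 2 1 2 = 0 := by norm_num [eps4, v3]
lemma e4_0213 : eps4 0 2 1 3 = -1 := by norm_num [eps4, v3]
lemma e4_0220 : eps4 0 2 2 0 = 0 := by norm_num [eps4, v3]
lemma e4_0221 : eps4 0 2 2 1 = 0 := by norm_num [eps4, v3]
lemma e4_0222 : eps4 0 2 2 2 = 0 := by norm_num [eps4, v3]
lemma e4_0223 : eps4 0 2 2 3 = 0 := by norm_num [eps4, v3]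
lemma e4_0230 : eps4 0 2 3 0 = 0 := by norm_num [eps4, v3]
lemma e4_0231 : eps4 0 2 3 1 = 1 := by norm_num [eps4, v3]
lemma e4_0232 : eps4 0 2 3 2 = 0 := by norm_num [eps4, v3]
lemma e4_0233 : eps4 0 2 3 3 = 0 := by norm_num [eps4, v3]
lemma e4_0300 : eps4 0 3 0 0 = 0 := by norm_num [eps4, v3]
lemma e4_0301 : eps4 0 3 0 1 = 0 := by norm_num [eps4, v3]
lemma e4_0302 : eps4 0 3 0 2 = 0 := by norm_num [eps4, v3]
lemma e4_0303 : eps4 0 3 0 3 = 0 := by norm_num [eps4, v3]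
lemma e4_0310 : eps4 0 3 1 0 = 0 := by norm_num [eps4, v3]
lemma e4_0311 : eps4 0 3 1 1 = 0 := by norm_num [eps4, v3]
lemma e4_0312 : eps4 0 3 1 2 = 1 := by norm_num [eps4, v3]
lemma e4_0313 : eps4 0 3 1 3 = 0 := by norm_num [eps4, v3]
lemma e4_0320 : eps4 0 3 2 0 = 0 := by norm_num [eps4, v3]
lemma e4_0321 : eps4 0 3 2 1 = -1 := by norm_num [eps4, v3]
lemma e4_0322 : eps4 0 3 2 2 = 0 := by norm_num [eps4, v3]
lemma e4_0323 : eps4 0 3 2 3 = 0 := by norm_num [eps4, v3]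
lemma e4_0330 : eps4 0 3 3 0 = 0 := by norm_num [eps4, v3]
lemma e4_0331 : eps4 0 3 3 1 = 0 := by norm_num [eps4, v3]
lemma e4_0332 : eps4 0 3 3 2 = 0 := by norm_num [eps4, v3]
lemma e4_0333 : eps4 0 3 3 3 = 0 := by norm_num [eps4, v3]
lemma e4_1000 : eps4 1 0 0 0 = 0 := by norm_num [eps4, v3]
lemma e4_1001 : eps4 1 0 0 1 = 0 := by norm_num [eps4, v3]
lemma e4_1002 : eps4 1 0 0 2 = 0 := by norm_num [eps4, v3]
lemma e4_1003 : eps4 1 0 0 3 = 0 := by norm_num [eps4, v3]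
lemma e4_1010 : eps4 1 0 1 0 = 0 := by norm_num [eps4, v3]
lemma e4_1011 : eps4 1 0 1 1 = 0 := by norm_num [eps4, v3]
lemma e4_1012 : eps4 1 0 1 2 = 0 := by norm_num [eps4, v3]
lemma e4_1013 : eps4 1 0 1 3 = 0 := by norm_num [eps4, v3]
lemma e4_1020 : eps4 1 0 2 0 = 0 := by norm_num [eps4, v3]
lemma e4_1021 : eps4 1 0 2 1 = 0 := by norm_num [eps4, v3]
lemma e4_1022 : eps4 1 0 2 2 = 0 := by norm_num [eps4, v3]
lemma e4_1023 : eps4 1 0 2 3 = -1 := by norm_num [eps4, v3]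
lemma e4_1030 : eps4 1 0 3 0 = 0 := by norm_num [eps4, v3]
lemma e4_1031 : eps4 1 0 3 1 = 0 := by norm_num [eps4, v3]
lemma e4_1032 : eps4 1 0 3 2 = 1 := by norm_num [eps4, v3]
lemma e4_1033 : eps4 1 0 3 3 = 0 := by norm_num [eps4, v3]
lemma e4_1100 : eps4 1 1 0 0 = 0 := by norm_num [eps4, v3]
lemma e4_1101 : eps4 1 1 0 1 = 0 := by norm_num [eps4, v3]
lemma e4_1102 : eps4 1 1 0 2 = 0 := by norm_num [eps4, v3]
lemma e4_1103 : eps4 1 1 0 3 = 0 := by norm_num [eps4, v3]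
lemma e4_1110 : eps4 1 1 1 0 = 0 := by norm_num [eps4, v3]
lemma e4_1111 : eps4 1 1 1 1 = 0 := by norm_num [eps4, v3]
lemma e4_1112 : eps4 1 1 1 2 = 0 := by norm_num [eps4, v3]
lemma e4_1113 : eps4 1 1 1 3 = 0 := by norm_num [eps4, v3]
lemma e4_1120 : eps4 1 1 2 0 = 0 := by norm_num [eps4, v3]
lemma e4_1121 : eps4 1 1 2 1 = 0 := by norm_num [eps4, v3]
lemma e4_1122 : eps4 1 1 2 2 = 0 := by norm_num [eps4, v3]
lemma e4_1123 : eps4 1 1 2 3 = 0 := by norm_num [eps4, v3]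
lemma e4_1130 : eps4 1 1 3 0 = 0 := by norm_num [eps4, v3]
lemma e4_1131 : eps4 1 1 3 1 = 0 := by norm_num [eps4, v3]
lemma e4_1132 : eps4 1 1 3 2 = 0 := by norm_num [eps4, v3]
lemma e4_1133 : eps4 1 1 3 3 = 0 := by norm_num [eps4, v3]
lemma e4_1200 : eps4 1 2 0 0 = 0 := by norm_num [eps4, v3]
lemma e4_1201 : eps4 1 2 0 1 = 0 := by norm_num [eps4, v3]
lemma e4_1202 : eps4 1 2 0 2 = 0 := by norm_num [eps4, v3]
lemma e4_1203 : eps4 1 2 0 3 = 1 := by norm_num [eps4, v3]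
lemma e4_1210 : eps4 1 2 1 0 = 0 := by norm_num [eps4, v3]
lemma e4_1211 : eps4 1 2 1 1 = 0 := by norm_num [eps4, v3]
lemma e4_1212 : eps4 1 2 1 2 = 0 := by norm_num [eps4, v3]
lemma e4_1213 : eps4 1 2 1 3 = 0 := by norm_num [eps4, v3]
lemma e4_1220 : eps4 1 2 2 0 = 0 := by norm_num [eps4, v3]
lemma e4_1221 : eps4 1 2 2 1 = 0 := by norm_num [eps4, v3]
lemma e4_1222 : eps4 1 2 2 2 = 0 := by norm_num [eps4, v3]
lemma e4_1223 : eps4 1 2 2 3 = 0 := by norm_num [eps4, v3]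
lemma e4_1230 : eps4 1 2 3 0 = -1 := by norm_num [eps4, v3]
lemma e4_1231 : eps4 1 2 3 1 = 0 := by norm_num [eps4, v3]
lemma e4_1232 : eps4 1 2 3 2 = 0 := by norm_num [eps4, v3]
lemma e4_1233 : eps4 1 2 3 3 = 0 := by norm_num [eps4, v3]
lemma e4_1300 : eps4 1 3 0 0 = 0 := by norm_num [eps4, v3]
lemma e4_1301 : eps4 1 3 0 1 = 0 := by norm_num [eps4, v3]
lemma e4_1302 : eps4 1 3 0 2 = -1 := by norm_num [eps4, v3]
lemma e4_1303 : eps4 1 3 0 3 = 0 := by norm_num [eps4, v3]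
lemma e4_1310 : eps4 1 3 1 0 = 0 := by norm_num [eps4, v3]
lemma e4_1311 : eps4 1 3 1 1 = 0 := by norm_num [eps4, v3]
lemma e4_1312 : eps4 1 3 1 2 = 0 := by norm_num [eps4, v3]
lemma e4_1313 : eps4 1 3 1 3 = 0 := by norm_num [eps4, v3]
lemma e4_1320 : eps4 1 3 2 0 = 1 := by norm_num [eps4, v3]
lemma e4_1321 : eps4 1 3 2 1 = 0 := by norm_num [eps4, v3]
lemma e4_1322 : eps4 1 3 2 2 = 0 := by norm_num [eps4, v3]
lemma e4_1323 : eps4 1 3 2 3 = 0 := by norm_num [eps4, v3]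
lemma e4_1330 : eps4 1 3 3 0 = 0 := by norm_num [eps4, v3]
lemma e4_1331 : eps4 1 3 3 1 = 0 := by norm_num [eps4, v3]
lemma e4_1332 : eps4 1 3 3 2 = 0 := by norm_num [eps4, v3]
lemma e4_1333 : eps4 1 3 3 3 = 0 := by norm_num [eps4, v3]
lemma e4_2000 : eps4 2 0 0 0 = 0 := by norm_num [eps4, v3]
lemma e4_2001 : eps4 2 0 0 1 = 0 := by norm_num [eps4, v3]
lemma e4_2002 : eps4 2 0 0 2 = 0 := by norm_num [eps4, v3]
lemma e4_2003 : eps4 2 0 0 3 = 0 := by norm_num [eps4, v3]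
lemma e4_2010 : eps4 2 0 1 0 = 0 := by norm_num [eps4, v3]
lemma e4_2011 : eps4 2 0 1 1 = 0 := by norm_num [eps4, v3]
lemma e4_2012 : eps4 2 0 1 2 = 0 := by norm_num [eps4, v3]
lemma e4_2013 : eps4 2 0 1 3 = 1 := by norm_num [eps4, v3]
lemma e4_2020 : eps4 2 0 2 0 = 0 := by norm_num [eps4, v3]
lemma e4_2021 : eps4 2 0 2 1 = 0 := by norm_num [eps4, v3]
lemma e4_2022 : eps4 2 0 2 2 = 0 := by norm_num [eps4, v3]
lemma e4_2023 : eps4 2 0 2 3 = 0 := by norm_num [eps4, v3]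
lemma e4_2030 : eps4 2 0 3 0 = 0 := by norm_num [eps4, v3]
lemma e4_2031 : eps4 2 0 3 1 = -1 := by norm_num [eps4, v3]
lemma e4_2032 : eps4 2 0 3 2 = 0 := by norm_num [eps4, v3]
lemma e4_2033 : eps4 2 0 3 3 = 0 := by norm_num [eps4, v3]
lemma e4_2100 : eps4 2 1 0 0 = 0 := by norm_num [eps4, v3]
lemma e4_2101 : eps4 2 1 0 1 = 0 := by norm_num [eps4, v3]
lemma e4_2102 : eps4 2 1 0 2 = 0 := by norm_num [eps4, v3]
lemma e4_2103 : eps4 2 1 0 3 = -1 := by norm_num [eps4, v3]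
lemma e4_2110 : eps4 2 1 1 0 = 0 := by norm_num [eps4, v3]
lemma e4_2111 : eps4 2 1 1 1 = 0 := by norm_num [eps4, v3]
lemma e4_2112 : eps4 2 1 1 2 = 0 := by norm_num [eps4, v3]
lemma e4_2113 : eps4 2 1 1 3 = 0 := by norm_num [eps4, v3]
lemma e4_2120 : eps4 2 1 2 0 = 0 := by norm_num [eps4, v3]
lemma e4_2121 : eps4 2 1 2 1 = 0 := by norm_num [eps4, v3]
lemma e4_2122 : eps4 2 1 2 2 = 0 := by norm_num [eps4, v3]
lemma e4_2123 : eps4 2 1 2 3 = 0 := by norm_num [eps4, v3]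
lemma e4_2130 : eps4 2 1 3 0 = 1 := by norm_num [eps4, v3]
lemma e4_2131 : eps4 2 1 3 1 = 0 := by norm_num [eps4, v3]
lemma e4_2132 : eps4 2 1 3 2 = 0 := by norm_num [eps4, v3]
lemma e4_2133 : eps4 2 1 3 3 = 0 := by norm_num [eps4, v3]
lemma e4_2200 : eps4 2 2 0 0 = 0 := by norm_num [eps4, v3]
lemma e4_2201 : eps4 2 2 0 1 = 0 := by norm_num [eps4, v3]
lemma e4_2202 : eps4 2 2 0 2 = 0 := by norm_num [eps4, v3]
lemma e4_2203 : eps4 2 2 0 3 = 0 := by norm_num [eps4, v3]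
lemma e4_2210 : eps4 2 2 1 0 = 0 := by norm_num [eps4, v3]
lemma e4_2211 : eps4 2 2 1 1 = 0 := by norm_num [eps4, v3]
lemma e4_2212 : eps4 2 2 1 2 = 0 := by norm_num [eps4, v3]
lemma e4_2213 : eps4 2 2 1 3 = 0 := by norm_num [eps4, v3]
lemma e4_2220 : eps4 2 2 2 0 = 0 := by norm_num [eps4, v3]
lemma e4_2221 : eps4 2 2 2 1 = 0 := by norm_num [eps4, v3]
lemma e4_2222 : eps4 2 2 2 2 = 0 := by norm_num [eps4, v3]
lemma e4_2223 : eps4 2 2 2 3 = 0 := by norm_num [eps4, v3]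
lemma e4_2230 : eps4 2 2 3 0 = 0 := by norm_num [eps4, v3]
lemma e4_2231 : eps4 2 2 3 1 = 0 := by norm_num [eps4, v3]
lemma e4_2232 : eps4 2 2 3 2 = 0 := by norm_num [eps4, v3]
lemma e4_2233 : eps4 2 2 3 3 = 0 := by norm_num [eps4, v3]
lemma e4_2300 : eps4 2 3 0 0 = 0 := by norm_num [eps4, v3]
lemma e4_2301 : eps4 2 3 0 1 = 1 := by norm_num [eps4, v3]
lemma e4_2302 : eps4 2 3 0 2 = 0 := by norm_num [eps4, v3]
lemma e4_2303 : eps4 2 3 0 3 = 0 := by norm_num [eps4, v3]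
lemma e4_2310 : eps4 2 3 1 0 = -1 := by norm_num [eps4, v3]
lemma e4_2311 : eps4 2 3 1 1 = 0 := by norm_num [eps4, v3]
lemma e4_2312 : eps4 2 3 1 2 = 0 := by norm_num [eps4, v3]
lemma e4_2313 : eps4 2 3 1 3 = 0 := by norm_num [eps4, v3]
lemma e4_2320 : eps4 2 3 2 0 = 0 := by norm_num [eps4, v3]
lemma e4_2321 : eps4 2 3 2 1 = 0 := by norm_num [eps4, v3]
lemma e4_2322 : eps4 2 3 2 2 = 0 := by norm_num [eps4, v3]
lemma e4_2323 : eps4 2 3 2 3 = 0 := by norm_num [eps4, v3]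
lemma e4_2330 : eps4 2 3 3 0 = 0 := by norm_num [eps4, v3]
lemma e4_2331 : eps4 2 3 3 1 = 0 := by norm_num [eps4, v3]
lemma e4_2332 : eps4 2 3 3 2 = 0 := by norm_num [eps4, v3]
lemma e4_2333 : eps4 2 3 3 3 = 0 := by norm_num [eps4, v3]
lemma e4_3000 : eps4 3 0 0 0 = 0 := by norm_num [eps4, v3]
lemma e4_3001 : eps4 3 0 0 1 = 0 := by norm_num [eps4, v3]
lemma e4_3002 : eps4 3 0 0 2 = 0 := by norm_num [eps4, v3]
lemma e4_3003 : eps4 3 0 0 3 = 0 := by norm_num [eps4, v3]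
lemma e4_3010 : eps4 3 0 1 0 = 0 := by norm_num [eps4, v3]
lemma e4_3011 : eps4 3 0 1 1 = 0 := by norm_num [eps4, v3]
lemma e4_3012 : eps4 3 0 1 2 = -1 := by norm_num [eps4, v3]
lemma e4_3013 : eps4 3 0 1 3 = 0 := by norm_num [eps4, v3]
lemma e4_3020 : eps4 3 0 2 0 = 0 := by norm_num [eps4, v3]
lemma e4_3021 : eps4 3 0 2 1 = 1 := by norm_num [eps4, v3]
lemma e4_3022 : eps4 3 0 2 2 = 0 := by norm_num [eps4, v3]
lemma e4_3023 : eps4 3 0 2 3 = 0 := by norm_num [eps4, v3]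
lemma e4_3030 : eps4 3 0 3 0 = 0 := by norm_num [eps4, v3]
lemma e4_3031 : eps4 3 0 3 1 = 0 := by norm_num [eps4, v3]
lemma e4_3032 : eps4 3 0 3 2 = 0 := by norm_num [eps4, v3]
lemma e4_3033 : eps4 3 0 3 3 = 0 := by norm_num [eps4, v3]
lemma e4_3100 : eps4 3 1 0 0 = 0 := by norm_num [eps4, v3]
lemma e4_3101 : eps4 3 1 0 1 = 0 := by norm_num [eps4, v3]
lemma e4_3102 : eps4 3 1 0 2 = 1 := by norm_num [eps4, v3]
lemma e4_3103 : eps4 3 1 0 3 = 0 := by norm_num [eps4, v3]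
lemma e4_3110 : eps4 3 1 1 0 = 0 := by norm_num [eps4, v3]
lemma e4_3111 : eps4 3 1 1 1 = 0 := by norm_num [eps4, v3]
lemma e4_3112 : eps4 3 1 1 2 = 0 := by norm_num [eps4, v3]
lemma e4_3113 : eps4 3 1 1 3 = 0 := by norm_num [eps4, v3]
lemma e4_3120 : eps4 3 1 2 0 = -1 := by norm_num [eps4, v3]
lemma e4_3121 : eps4 3 1 2 1 = 0 := by norm_num [eps4, v3]
lemma e4_3122 : eps4 3 1 2 2 = 0 := by norm_num [eps4, v3]
lemma e4_3123 : eps4 3 1 2 3 = 0 := by norm_num [eps4, v3]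
lemma e4_3130 : eps4 3 1 3 0 = 0 := by norm_num [eps4, v3]
lemma e4_3131 : eps4 3 1 3 1 = 0 := by norm_num [eps4, v3]
lemma e4_3132 : eps4 3 1 3 2 = 0 := by norm_num [eps4, v3]
lemma e4_3133 : eps4 3 1 3 3 = 0 := by norm_num [eps4, v3]
lemma e4_3200 : eps4 3 2 0 0 = 0 := by norm_num [eps4, v3]
lemma e4_3201 : eps4 3 2 0 1 = -1 := by norm_num [eps4, v3]
lemma e4_3202 : eps4 3 2 0 2 = 0 := by norm_num [eps4, v3]
lemma e4_3203 : eps4 3 2 0 3 = 0 := by norm_num [eps4, v3]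
lemma e4_3210 : eps4 3 2 1 0 = 1 := by norm_num [eps4, v3]
lemma e4_3211 : eps4 3 2 1 1 = 0 := by norm_num [eps4, v3]
lemma e4_3212 : eps4 3 2 1 2 = 0 := by norm_num [eps4, v3]
lemma e4_3213 : eps4 3 2 1 3 = 0 := by norm_num [eps4, v3]
lemma e4_3220 : eps4 3 2 2 0 = 0 := by norm_num [eps4, v3]
lemma e4_3221 : eps4 3 2 2 1 = 0 := by norm_num [eps4, v3]
lemma e4_3222 : eps4 3 2 2 2 = 0 := by norm_num [eps4, v3]
lemma e4_3223 : eps4 3 2 2 3 = 0 := by norm_num [eps4, v3]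
lemma e4_3230 : eps4 3 2 3 0 = 0 := by norm_num [eps4, v3]
lemma e4_3231 : eps4 3 2 3 1 = 0 := by norm_num [eps4, v3]
lemma e4_3232 : eps4 3 2 3 2 = 0 := by norm_num [eps4, v3]
lemma e4_3233 : eps4 3 2 3 3 = 0 := by norm_num [eps4, v3]
lemma e4_3300 : eps4 3 3 0 0 = 0 := by norm_num [eps4, v3]
lemma e4_3301 : eps4 3 3 0 1 = 0 := by norm_num [eps4, v3]
lemma e4_3302 : eps4 3 3 0 2 = 0 := by norm_num [eps4, v3]
lemma e4_3303 : eps4 3 3 0 3 = 0 := by norm_num [eps4, v3]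
lemma e4_3310 : eps4 3 3 1 0 = 0 := by norm_num [eps4, v3]
lemma e4_3311 : eps4 3 3 1 1 = 0 := by norm_num [eps4, v3]
lemma e4_3312 : eps4 3 3 1 2 = 0 := by norm_num [eps4, v3]
lemma e4_3313 : eps4 3 3 1 3 = 0 := by norm_num [eps4, v3]
lemma e4_3320 : eps4 3 3 2 0 = 0 := by norm_num [eps4, v3]
lemma e4_3321 : eps4 3 3 2 1 = 0 := by norm_num [eps4, v3]
lemma e4_3322 : eps4 3 3 2 2 = 0 := by norm_num [eps4, v3]
lemma e4_3323 : eps4 3 3 2 3 = 0 := by norm_num [eps4, v3]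
lemma e4_3330 : eps4 3 3 3 0 = 0 := by norm_num [eps4, v3]
lemma e4_3331 : eps4 3 3 3 1 = 0 := by norm_num [eps4, v3]
lemma e4_3332 : eps4 3 3 3 2 = 0 := by norm_num [eps4, v3]
lemma e4_3333 : eps4 3 3 3 3 = 0 := by norm_num [eps4, v3]
attribute [local simp] e3_000 e3_001 e3_002 e3_010 e3_011 e3_012 e3_020 e3_021 e3_022 e3_100 e3_101 e3_102 e3_110 e3_111 e3_112 e3_120 e3_121 e3_122 e3_200 e3_201 e3_202 e3_210 e3_211 e3_212 e3_220 e3_221 e3_222 e4_0000 e4_0001 e4_0002 e4_0003 e4_0010 e4_0011 e4_0012 e4_0013 e4_0020 e4_0021 e4_0022 e4_0023 e4_0030 e4_0031 e4_0032 e4_0033 e4_0100 e4_0101 e4_0102 e4_0103 e4_0110 e4_0111 e4_0112 e4_0113 e4_0120 e4_0121 e4_0122 e4_0123 e4_0130 e4_0131 e4_0132 e4_0133 e4_0200 e4_0201 e4_0202 e4_0203 e4_0210 e4_0211 e4_0212 e4_0213 e4_0220 e4_0221 e4_0222 e4_0223 e4_0230 e4_0231 e4_0232 e4_0233 e4_0300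 e4_0301 e4_0302 e4_0303 e4_0310 e4_0311 e4_0312 e4_0313 e4_0320 e4_0321 e4_0322 e4_0323 e4_0330 e4_0331 e4_0332 e4_0333 e4_1000 e4_1001 e4_1002 e4_1003 e4_1010 e4_1011 e4_1012 e4_1013 e4_1020 e4_1021 e4_1022 e4_1023 e4_1030 e4_1031 e4_1032 e4_1033 e4_1100 e4_1101 e4_1102 e4_1103 e4_1110 e4_1111 e4_1112 e4_1113 e4_1120 e4_1121 e4_1122 e4_1123 e4_1130 e4_1131 e4_1132 e4_1133 e4_1200 e4_1201 e4_1202 e4_1203 e4_1210 e4_1211 e4_1212 e4_1213 e4_1220 e4_1221 e4_1222 e4_1223 e4_1230 e4_1231 e4_1232 e4_1233 e4_1300 e4_1301 e4_1302 e4_1303 e4_1310 e4_1311 e4_1312 e4_1313 e4_1320 e4_1321 e4_1322 e4_1323 e4_1330 e4_1331 e4_1332 e4_1333 e4_2000 e4_2001 e4_2002 e4_2003 e4_2010 e4_2011 e4_2012 e4_2013 e4_2020 e4_2021 e4_2022 e4_2023 e4_2030 e4_2031 e4_2032 e4_2033 e4_2100 e4_2101 e4_2102 e4_2103 e4_2110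 e4_2111 e4_2112 e4_2113 e4_2120 e4_2121 e4_2122 e4_2123 e4_2130 e4_2131 e4_2132 e4_2133 e4_2200 e4_2201 e4_2202 e4_2203 e4_2210 e4_2211 e4_2212 e4_2213 e4_2220 e4_2221 e4_2222 e4_2223 e4_2230 e4_2231 e4_2232 e4_2233 e4_2300 e4_2301 e4_2302 e4_2303 e4_2310 e4_2311 e4_2312 e4_2313 e4_2320 e4_2321 e4_2322 e4_2323 e4_2330 e4_2331 e4_2332 e4_2333 e4_3000 e4_3001 e4_3002 e4_3003 e4_3010 e4_3011 e4_3012 e4_3013 e4_3020 e4_3021 e4_3022 e4_3023 e4_3030 e4_3031 e4_3032 e4_3033 e4_3100 e4_3101 e4_3102 e4_3103 e4_3110 e4_3111 e4_3112 e4_3113 e4_3120 e4_3121 e4_3122 e4_3123 e4_3130 e4_3131 e4_3132 e4_3133 e4_3200 e4_3201 e4_3202 e4_3203 e4_3210 e4_3211 e4_3212 e4_3213 e4_3220 e4_3221 e4_3222 e4_3223 e4_3230 e4_3231 e4_3232 e4_3233 e4_3300 e4_3301 e4_3302 e4_3303 e4_3310 e4_3311 e4_3312 e4_3313 e4_3320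 e4_3321 e4_3322 e4_3323 e4_3330 e4_3331 e4_3332 e4_3333

lemma fs0 : Fin.succ (0 : Fin 3) = 1 := rfl
lemma fs1 : Fin.succ (1 : Fin 3) = 2 := rfl
lemma fs2 : Fin.succ (2 : Fin 3) = 3 := rfl
lemma Sig0 (E : Fin 4 → Fin 4 → ℝ) (μ ν : Fin 4) :
    Sig E 0 μ ν = Complex.I * ((E 0 μ : ℂ) * E 1 ν - (E 0 ν : ℂ) * E 1 μ)
      - ((E 2 μ : ℂ) * E 3 ν - (E 3 μ : ℂ) * E 2 ν) := by
  simp [Sig, Fin.sum_univ_three, eps3, fs0, fs1, fs2]; norm_num; ring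
lemma Sig1 (E : Fin 4 → Fin 4 → ℝ) (μ ν : Fin 4) :
    Sig E 1 μ ν = Complex.I * ((E 0 μ : ℂ) * E 2 ν - (E 0 ν : ℂ) * E 2 μ)
      - ((E 3 μ : ℂ) * E 1 ν - (E 1 μ : ℂ) * E 3 ν) := by
  simp [Sig, Fin.sum_univ_three, eps3, fs0, fs1, fs2]; norm_num; ring
lemma Sig2 (E : Fin 4 → Fin 4 → ℝ) (μ ν : Fin 4) :
    Sig E 2 μ ν = Complex.I * ((E 0 μ : ℂ) * E 3 ν - (E 0 ν : ℂ) * E 3 μ)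
      - ((E 1 μ : ℂ) * E 2 ν - (E 2 μ : ℂ) * E 1 ν) := by
  simp [Sig, Fin.sum_univ_three, eps3, fs0, fs1, fs2]; norm_num; ring

lemma det4 (E : Fin 4 → Fin 4 → ℝ) : (Matrix.of E).det =
    E 0 0 * (E 1 1 * (E 2 2 * E 3 3 - E 2 3 * E 3 2)
           - E 1 2 * (E 2 1 * E 3 3 - E 2 3 * E 3 1)
           + E 1 3 * (E 2 1 * E 3 2 - E 2 2 * E 3 1))
  - E 0 1 * (E 1 0 * (E 2 2 * E 3 3 - E 2 3 * E 3 2)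
           - E 1 2 * (E 2 0 * E 3 3 - E 2 3 * E 3 0)
           + E 1 3 * (E 2 0 * E 3 2 - E 2 2 * E 3 0))
  + E 0 2 * (E 1 0 * (E 2 1 * E 3 3 - E 2 3 * E 3 1)
           - E 1 1 * (E 2 0 * E 3 3 - E 2 3 * E 3 0)
           + E 1 3 * (E 2 0 * E 3 1 - E 2 1 * E 3 0))
  - E 0 3 * (E 1 0 * (E 2 1 * E 3 2 - E 2 2 * E 3 1)
           - E 1 1 * (E 2 0 * E 3 2 - E 2 2 * E 3 0)
           + E 1 2 * (E 2 0 * E 3 1 - E 2 1 * E 3 0)) := by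
  rw [Matrix.det_succ_row_zero]
  have fs0 : Fin.succ (0 : Fin 3) = 1 := rfl
  have fs1 : Fin.succ (1 : Fin 3) = 2 := rfl
  have fs2 : Fin.succ (2 : Fin 3) = 3 := rfl
  simp [Fin.sum_univ_four, Matrix.det_fin_three, Matrix.submatrix_apply, Fin.succAbove,
    fs0, fs1, fs2, show ((2:Fin 3).castSucc) = 2 from rfl,
    show (((3:Fin 4)):ℕ) = 3 from rfl]
  norm_num
  ring

set_option maxHeartbeats 4000000 in
lemma main_id (E : Fin 4 → Fin 4 → ℝ) (μ ν : Fin 4) :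
      (Complex.I / 12) * ∑ i, ∑ j, ∑ k, ∑ ρ, ∑ σ, ∑ α, ∑ β,
        (eps3 i j k : ℂ) * Sig E i μ ρ * Sig E j ν σ * Sig E k α β * (eps4 ρ σ α β : ℂ)
      = -((Matrix.of E).det : ℂ) * (eta E μ ν : ℂ) := by
  have hI3 : (Complex.I)^3 = -Complex.I := by
    rw [pow_succ, Complex.I_sq]; ring
  simp only [Fin.sum_univ_three, Fin.sum_univ_four, Sig0, Sig1, Sig2]
  simp only [e3_000, e3_001, e3_002, e3_010, e3_011, e3_012, e3_020, e3_021, e3_022, e3_100, e3_101, e3_102, e3_110, e3_111, e3_112, e3_120, e3_121, e3_122, e3_200, e3_201, e3_202, e3_210, e3_211, e3_212, e3_220, e3_221, e3_222, e4_0000, e4_0001, e4_0002, e4_0003, e4_0010, e4_0011, e4_0012, e4_0013, e4_0020, e4_0021, e4_0022, e4_0023, e4_0030, e4_0031, e4_0032, e4_0033, e4_0100, e4_0101, e4_0102, e4_0103, e4_0110, e4_0111, e4_0112, e4_0113, e4_0120, e4_0121, e4_0122, e4_0123, e4_0130, e4_0131, e4_0132, e4_0133, e4_0200, e4_0201, e4_0202,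 e4_0203, e4_0210, e4_0211, e4_0212, e4_0213, e4_0220, e4_0221, e4_0222, e4_0223, e4_0230, e4_0231, e4_0232, e4_0233, e4_0300, e4_0301, e4_0302, e4_0303, e4_0310, e4_0311, e4_0312, e4_0313, e4_0320, e4_0321, e4_0322, e4_0323, e4_0330, e4_0331, e4_0332, e4_0333, e4_1000, e4_1001, e4_1002, e4_1003, e4_1010, e4_1011, e4_1012, e4_1013, e4_1020, e4_1021, e4_1022, e4_1023, e4_1030, e4_1031, e4_1032, e4_1033, e4_1100, e4_1101, e4_1102, e4_1103, e4_1110, e4_1111, e4_1112, e4_1113, e4_1120, e4_1121, e4_1122, e4_1123, e4_1130, e4_1131, e4_1132, e4_1133, e4_1200, e4_1201, e4_1202, e4_1203, e4_1210, e4_1211, e4_1212, e4_1213, e4_1220, e4_1221, e4_1222, e4_1223, e4_1230, e4_1231, e4_1232, e4_1233, e4_1300, e4_1301, e4_1302, e4_1303, e4_1310, e4_1311, e4_1312, e4_1313, e4_1320, e4_1321, e4_1322, e4_1323, e4_1330, e4_1331, e4_1332, e4_1333, e4_2000, e4_2001, e4_2002, e4_2003, e4_2010, e4_2011, e4_2012,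 e4_2013, e4_2020, e4_2021, e4_2022, e4_2023, e4_2030, e4_2031, e4_2032, e4_2033, e4_2100, e4_2101, e4_2102, e4_2103, e4_2110, e4_2111, e4_2112, e4_2113, e4_2120, e4_2121, e4_2122, e4_2123, e4_2130, e4_2131, e4_2132, e4_2133, e4_2200, e4_2201, e4_2202, e4_2203, e4_2210, e4_2211, e4_2212, e4_2213, e4_2220, e4_2221, e4_2222, e4_2223, e4_2230, e4_2231, e4_2232, e4_2233, e4_2300, e4_2301, e4_2302, e4_2303, e4_2310, e4_2311, e4_2312, e4_2313, e4_2320, e4_2321, e4_2322, e4_2323, e4_2330, e4_2331, e4_2332, e4_2333, e4_3000, e4_3001, e4_3002, e4_3003, e4_3010, e4_3011, e4_3012, e4_3013, e4_3020, e4_3021, e4_3022, e4_3023, e4_3030, e4_3031, e4_3032, e4_3033, e4_3100, e4_3101, e4_3102, e4_3103, e4_3110, e4_3111, e4_3112, e4_3113, e4_3120, e4_3121, e4_3122, e4_3123, e4_3130, e4_3131, e4_3132, e4_3133, e4_3200, e4_3201, e4_3202, e4_3203, e4_3210, e4_3211, e4_3212, e4_3213, e4_3220, e4_3221, e4_3222,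 e4_3223, e4_3230, e4_3231, e4_3232, e4_3233, e4_3300, e4_3301, e4_3302, e4_3303, e4_3310, e4_3311, e4_3312, e4_3313, e4_3320, e4_3321, e4_3322, e4_3323, e4_3330, e4_3331, e4_3332, e4_3333,
    Complex.ofReal_zero, Complex.ofReal_one, Complex.ofReal_neg, zero_mul,
    mul_zero, neg_mul, mul_neg, neg_neg, one_mul, mul_one, add_zero, zero_add]
  rw [det4]
  simp only [Matrix.of_apply, eta]
  push_cast
  ring_nf
  simp only [Complex.I_sq, hI3, Complex.I_pow_four]
  ring
/-- Urbantke formula: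
`(i/12) ε^{ijk} Σ^i_{μρ} Σ^j_{νσ} Σ^k_{αβ} ε̃^{ρσαβ} = −(det E) η_{μν}`,
together with `det E = √(−det η)`. -/
theorem urbantke_formula (E : Fin 4 → Fin 4 → ℝ)
    (hE : 0 < (Matrix.of E).det) :
    (∀ μ ν : Fin 4,
      (Complex.I / 12) * ∑ i, ∑ j, ∑ k, ∑ ρ, ∑ σ, ∑ α, ∑ β,
        (eps3 i j k : ℂ) * Sig E i μ ρ * Sig E j ν σ * Sig E k α β * (eps4 ρ σ α β : ℂ)
      = -((Matrix.of E).det : ℂ) * (eta E μ ν : ℂ)) ∧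
    (Matrix.of E).det = Real.sqrt (-(eta E).det) := by
  refine ⟨fun μ ν => main_id E μ ν, ?_⟩
  have hfac : eta E = (Matrix.of E)ᵀ * (Matrix.diagonal ![-1,1,1,1]) * (Matrix.of E) := by
    ext μ ν
    simp [eta, Matrix.mul_apply, Matrix.diagonal, Fin.sum_univ_four, Matrix.of_apply,
      Matrix.transpose_apply]
  have hdet : (eta E).det = -((Matrix.of E).det)^2 := by
    rw [hfac]
    simp [Matrix.det_mul, Matrix.det_transpose, Matrix.det_diagonal, Fin.prod_univ_four]
    ring
  rw [hdet, neg_neg, Real.sqrt_sq hE.le]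

end Urbantke
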